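/- arXiv:2012.05381 — 4 statements merged into one kernel-verified Lean document; each statement's English description precedes it below -/
import Mathlib

section
/- Let s ≥ 1 and let (A_m)_{m∈ℕ} and (B_k)_{k∈ℕ} be two sequences of positive real numbers. Then there exists a constant C_s > 0 (depending only on s) such that ∑_{m,k∈ℕ} A_m B_k^{1/s} / (2^m + 2^k)^{1/s} ≤ C_s ( max{ ∑_{m∈ℕ} A_m^{1+1/s} 2^{−m/s}, ∑_{k∈ℕ} B_k^{1+1/s} 2^{−k/s} } + ∑_{m∈ℕ} A_m B_m^{1/s} 2^{−m/s} ), where the inequality is understood in [0,∞] (in particular it is vacuous when the right-hand side is infinite). -/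
open ENNReal

/-- Geometric-tail bound: `∑_j t^{|n-j|} ≤ 2/(1-t)` in `ℝ≥0∞`. -/
lemma geom_dist_tsum_le (t : ℝ≥0∞) (n : ℕ) :
    (∑' j : ℕ, t ^ (n - j + (j - n))) ≤ 2 * (1 - t)⁻¹ := by
  set i : ℕ → Bool × ℕ := fun j => if j ≤ n then ((false, n - j) : Bool × ℕ) else (true, j - n)
    with hi_def
  have hi : Function.Injective i := by
    intro j1 j2 h
    simp only [hi_def] at h
    split_ifs at h <;> simp_all <;> omega
  calc (∑' j : ℕ, t ^ (n - j + (j - n)))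
      = ∑' j : ℕ, (fun x : Bool × ℕ => t ^ x.2) (i j) := by
        refine tsum_congr fun j => ?_
        simp only [hi_def]
        by_cases h : j ≤ n
        · rw [if_pos h]; congr 1; omega
        · rw [if_neg h]; congr 1; omega
    _ ≤ ∑' x : Bool × ℕ, t ^ x.2 := ENNReal.tsum_comp_le_tsum_of_injective hi _
    _ = 2 * (1 - t)⁻¹ := by
        rw [ENNReal.tsum_prod']
        simp [ENNReal.tsum_geometric, tsum_fintype, two_mul]

/-- For `s ≥ 1` there is a constant `C = C_s > 0` such that for all positive
sequences `(A_m)` and `(B_k)`,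
`∑_{m,k} A_m B_k^{1/s} / (2^m + 2^k)^{1/s} ≤ C (max{∑ A_m^{1+1/s} 2^{-m/s}, ∑ B_k^{1+1/s} 2^{-k/s}}
   + ∑ A_m B_m^{1/s} 2^{-m/s})`, the inequality being understood in `[0,∞]`. -/
theorem diagonal_double_sum_bound (s : ℝ) (hs : 1 ≤ s) :
    ∃ C : ℝ, 0 < C ∧
      ∀ A B : ℕ → ℝ, (∀ m, 0 < A m) → (∀ k, 0 < B k) →
        (∑' (m : ℕ) (k : ℕ),
            ENNReal.ofReal (A m) * ENNReal.ofReal (B k) ^ (1 / s)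
              / ((2 : ℝ≥0∞) ^ m + (2 : ℝ≥0∞) ^ k) ^ (1 / s))
          ≤ ENNReal.ofReal C *
            (max (∑' m : ℕ, ENNReal.ofReal (A m) ^ (1 + 1 / s) * (2 : ℝ≥0∞) ^ (-(m : ℝ) / s))
                 (∑' k : ℕ, ENNReal.ofReal (B k) ^ (1 + 1 / s) * (2 : ℝ≥0∞) ^ (-(k : ℝ) / s))
              + ∑' m : ℕ,
                  ENNReal.ofReal (A m) * ENNReal.ofReal (B m) ^ (1 / s)
                    * (2 : ℝ≥0∞) ^ (-(m : ℝ) / s)) := by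
  have hs0 : (0:ℝ) < s := lt_of_lt_of_le one_pos hs
  have hsne : s ≠ 0 := ne_of_gt hs0
  have hp0 : (0:ℝ) < 1 + 1 / s := by positivity
  have hq0 : (0:ℝ) < 1 + s := by linarith
  have hp1 : (1:ℝ) < 1 + 1 / s := by
    have : (0:ℝ) < 1 / s := by positivity
    linarith
  have hpq : (1 + 1 / s).HolderConjugate (1 + s) := by
    rw [Real.holderConjugate_iff]
    constructor
    · exact hp1
    · field_simp
      ring
  -- the geometric ratio
  set t : ℝ≥0∞ := (2 : ℝ≥0∞) ^ (-(1 / (2 * s ^ 2))) with ht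
  have hc0 : (0:ℝ) < 1 / (2 * s ^ 2) := by positivity
  have ht1 : t < 1 := by
    rw [ht, ENNReal.rpow_neg]
    exact ENNReal.inv_lt_one.mpr (ENNReal.one_lt_rpow one_lt_two hc0)
  have h1t_ne_top : (1:ℝ≥0∞) - t ≠ ∞ := ne_top_of_le_ne_top one_ne_top tsub_le_self
  have hKne : ((1:ℝ≥0∞) - t)⁻¹ ≠ ∞ := by
    rw [Ne, ENNReal.inv_eq_top]
    exact (tsub_pos_of_lt ht1).ne'
  set C0 : ℝ≥0∞ := 4 * (1 - t)⁻¹ with hC0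
  have hC0top : C0 ≠ ∞ := ENNReal.mul_ne_top (by norm_num) hKne
  have hC0ne : C0 ≠ 0 := by
    rw [hC0]
    exact mul_ne_zero (by norm_num) (by rw [Ne, ENNReal.inv_eq_zero]; exact h1t_ne_top)
  refine ⟨C0.toReal, ENNReal.toReal_pos hC0ne hC0top, ?_⟩
  intro A B hA hB
  rw [ENNReal.ofReal_toReal hC0top]
  have h2ne : (2:ℝ≥0∞) ≠ 0 := two_ne_zero
  have h2top : (2:ℝ≥0∞) ≠ ∞ := ENNReal.ofNat_ne_top
  -- the two real exponent inequalities
  have key_real1 : ∀ r u : ℝ, u ≤ r →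
      -(r * (1 / s)) ≤ -r / ((1 + 1/s) * s) + -u / ((1 + s) * s) + -(1/(2*s^2)) * (r - u) := by
    intro r u h
    have hid : -r / ((1 + 1/s) * s) + -u / ((1 + s) * s) + -(1/(2*s^2)) * (r - u)
        - (-(r * (1 / s))) = (r - u) * (s - 1) / (2 * s^2 * (s + 1)) := by
      field_simp
      ring
    nlinarith [div_nonneg (mul_nonneg (sub_nonneg.mpr h) (sub_nonneg.mpr hs))
      (by positivity : (0:ℝ) ≤ 2 * s^2 * (s + 1))]
  have key_real2 : ∀ r u : ℝ, u ≤ r →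
      -(r * (1 / s)) ≤ -u / ((1 + 1/s) * s) + -r / ((1 + s) * s) + -(1/(2*s^2)) * (r - u) := by
    intro r u h
    have hid : -u / ((1 + 1/s) * s) + -r / ((1 + s) * s) + -(1/(2*s^2)) * (r - u)
        - (-(r * (1 / s))) = (r - u) * ((2*s + 1) * (s - 1)) / (2 * s^2 * (s + 1)) := by
      field_simp
      ring
    nlinarith [div_nonneg (mul_nonneg (sub_nonneg.mpr h)
      (mul_nonneg (by linarith : (0:ℝ) ≤ 2*s + 1) (sub_nonneg.mpr hs)))
      (by positivity : (0:ℝ) ≤ 2 * s^2 * (s + 1))]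
  -- pointwise key bound
  have key : ∀ m k : ℕ,
      ENNReal.ofReal (A m) * ENNReal.ofReal (B k) ^ (1 / s)
        / ((2 : ℝ≥0∞) ^ m + (2 : ℝ≥0∞) ^ k) ^ (1 / s)
      ≤ (ENNReal.ofReal (A m) ^ (1 + 1 / s) * (2 : ℝ≥0∞) ^ (-(m : ℝ) / s)
          + ENNReal.ofReal (B k) ^ (1 + 1 / s) * (2 : ℝ≥0∞) ^ (-(k : ℝ) / s))
          * t ^ (m - k + (k - m)) := by
    intro m k
    set X := ENNReal.ofReal (A m) * (2:ℝ≥0∞) ^ (-(m:ℝ) / ((1 + 1/s) * s)) with hX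
    set Y := ENNReal.ofReal (B k) ^ (1/s) * (2:ℝ≥0∞) ^ (-(k:ℝ) / ((1 + s) * s)) with hY
    have hXp : X ^ (1 + 1/s) = ENNReal.ofReal (A m) ^ (1 + 1/s) * (2:ℝ≥0∞) ^ (-(m:ℝ) / s) := by
      rw [hX, ENNReal.mul_rpow_of_nonneg _ _ hp0.le, ← ENNReal.rpow_mul,
        show -(m:ℝ) / ((1 + 1/s) * s) * (1 + 1/s) = -(m:ℝ) / s by
          field_simp]
    have hYq : Y ^ (1 + s) = ENNReal.ofReal (B k) ^ (1 + 1/s) * (2:ℝ≥0∞) ^ (-(k:ℝ) / s) := by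
      rw [hY, ENNReal.mul_rpow_of_nonneg _ _ hq0.le, ← ENNReal.rpow_mul, ← ENNReal.rpow_mul,
        show (1/s) * (1 + s) = 1 + 1/s by
          field_simp
          ring,
        show -(k:ℝ) / ((1 + s) * s) * (1 + s) = -(k:ℝ) / s by
          field_simp]
    have young : X * Y ≤ X ^ (1 + 1/s) + Y ^ (1 + s) := by
      refine (ENNReal.young_inequality X Y hpq).trans (add_le_add ?_ ?_)
      · rw [div_eq_mul_inv]
        calc X ^ (1 + 1/s) * (ENNReal.ofReal (1 + 1/s))⁻¹
            ≤ X ^ (1 + 1/s) * 1 :=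
              mul_le_mul_right (ENNReal.inv_le_one.mpr (ENNReal.one_le_ofReal.mpr hp1.le)) _
          _ = X ^ (1 + 1/s) := mul_one _
      · rw [div_eq_mul_inv]
        calc Y ^ (1 + s) * (ENNReal.ofReal (1 + s))⁻¹
            ≤ Y ^ (1 + s) * 1 :=
              mul_le_mul_right (ENNReal.inv_le_one.mpr
                (ENNReal.one_le_ofReal.mpr (by linarith))) _
          _ = Y ^ (1 + s) := mul_one _
    have hW : (((2 : ℝ≥0∞) ^ m + (2 : ℝ≥0∞) ^ k) ^ (1 / s))⁻¹
        ≤ (2:ℝ≥0∞) ^ (-(m:ℝ) / ((1 + 1/s) * s)) * (2:ℝ≥0∞) ^ (-(k:ℝ) / ((1 + s) * s))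
            * t ^ (m - k + (k - m)) := by
      have hM : (2:ℝ≥0∞) ^ ((max m k : ℕ) : ℝ) ≤ (2:ℝ≥0∞) ^ m + (2:ℝ≥0∞) ^ k := by
        rw [ENNReal.rpow_natCast]
        rcases max_cases m k with ⟨h1, _⟩ | ⟨h1, _⟩ <;> rw [h1]
        · exact le_self_add
        · exact le_add_self
      have step1 : (2:ℝ≥0∞) ^ (((max m k : ℕ) : ℝ) * (1/s))
          ≤ ((2 : ℝ≥0∞) ^ m + (2 : ℝ≥0∞) ^ k) ^ (1 / s) := by
        rw [ENNReal.rpow_mul]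
        exact ENNReal.rpow_le_rpow hM (by positivity)
      have step2 : (((2 : ℝ≥0∞) ^ m + (2 : ℝ≥0∞) ^ k) ^ (1 / s))⁻¹
          ≤ (2:ℝ≥0∞) ^ (-(((max m k : ℕ) : ℝ) * (1/s))) := by
        rw [ENNReal.rpow_neg]
        exact ENNReal.inv_le_inv.mpr step1
      refine step2.trans ?_
      have hD : t ^ (m - k + (k - m))
          = (2:ℝ≥0∞) ^ (-(1/(2*s^2)) * ((m - k + (k - m) : ℕ) : ℝ)) := by
        rw [ht, ← ENNReal.rpow_natCast ((2:ℝ≥0∞) ^ (-(1 / (2 * s ^ 2)) : ℝ)) (m - k + (k - m)),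
          ← ENNReal.rpow_mul]
      rw [hD, ← ENNReal.rpow_add _ _ h2ne h2top, ← ENNReal.rpow_add _ _ h2ne h2top]
      apply ENNReal.rpow_le_rpow_of_exponent_le one_le_two
      rcases le_total k m with hkm | hmk
      · have hmax : max m k = m := max_eq_left hkm
        have hDc : ((m - k + (k - m) : ℕ) : ℝ) = (m:ℝ) - (k:ℝ) := by
          have h' : (m - k + (k - m) : ℕ) = m - k := by omega
          rw [h', Nat.cast_sub hkm]
        rw [hmax, hDc]
        exact key_real1 (m:ℝ) (k:ℝ) (by exact_mod_cast hkm)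
      · have hmax : max m k = k := max_eq_right hmk
        have hDc : ((m - k + (k - m) : ℕ) : ℝ) = (k:ℝ) - (m:ℝ) := by
          have h' : (m - k + (k - m) : ℕ) = k - m := by omega
          rw [h', Nat.cast_sub hmk]
        rw [hmax, hDc]
        exact key_real2 (k:ℝ) (m:ℝ) (by exact_mod_cast hmk)
    calc ENNReal.ofReal (A m) * ENNReal.ofReal (B k) ^ (1 / s)
          / ((2 : ℝ≥0∞) ^ m + (2 : ℝ≥0∞) ^ k) ^ (1 / s)
        = ENNReal.ofReal (A m) * ENNReal.ofReal (B k) ^ (1 / s)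
            * (((2 : ℝ≥0∞) ^ m + (2 : ℝ≥0∞) ^ k) ^ (1 / s))⁻¹ := by rw [div_eq_mul_inv]
      _ ≤ ENNReal.ofReal (A m) * ENNReal.ofReal (B k) ^ (1 / s)
            * ((2:ℝ≥0∞) ^ (-(m:ℝ) / ((1 + 1/s) * s)) * (2:ℝ≥0∞) ^ (-(k:ℝ) / ((1 + s) * s))
              * t ^ (m - k + (k - m))) := mul_le_mul_right hW _
      _ = X * Y * t ^ (m - k + (k - m)) := by rw [hX, hY]; ring
      _ ≤ (X ^ (1 + 1/s) + Y ^ (1 + s)) * t ^ (m - k + (k - m)) := mul_le_mul_left young _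
      _ = _ := by rw [hXp, hYq]
  -- now sum up
  calc (∑' (m : ℕ) (k : ℕ),
          ENNReal.ofReal (A m) * ENNReal.ofReal (B k) ^ (1 / s)
            / ((2 : ℝ≥0∞) ^ m + (2 : ℝ≥0∞) ^ k) ^ (1 / s))
      ≤ ∑' (m : ℕ) (k : ℕ),
          (ENNReal.ofReal (A m) ^ (1 + 1 / s) * (2 : ℝ≥0∞) ^ (-(m : ℝ) / s)
            + ENNReal.ofReal (B k) ^ (1 + 1 / s) * (2 : ℝ≥0∞) ^ (-(k : ℝ) / s))
            * t ^ (m - k + (k - m)) :=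
        ENNReal.tsum_le_tsum fun m => ENNReal.tsum_le_tsum fun k => key m k
    _ = (∑' (m : ℕ) (k : ℕ),
          ENNReal.ofReal (A m) ^ (1 + 1 / s) * (2 : ℝ≥0∞) ^ (-(m : ℝ) / s)
            * t ^ (m - k + (k - m)))
        + ∑' (m : ℕ) (k : ℕ),
          ENNReal.ofReal (B k) ^ (1 + 1 / s) * (2 : ℝ≥0∞) ^ (-(k : ℝ) / s)
            * t ^ (m - k + (k - m)) := by
        rw [← ENNReal.tsum_add]
        refine tsum_congr fun m => ?_
        rw [← ENNReal.tsum_add]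
        exact tsum_congr fun k => add_mul _ _ _
    _ ≤ (∑' m : ℕ, ENNReal.ofReal (A m) ^ (1 + 1 / s) * (2 : ℝ≥0∞) ^ (-(m : ℝ) / s))
          * (2 * (1 - t)⁻¹)
        + (∑' k : ℕ, ENNReal.ofReal (B k) ^ (1 + 1 / s) * (2 : ℝ≥0∞) ^ (-(k : ℝ) / s))
          * (2 * (1 - t)⁻¹) := by
        refine add_le_add ?_ ?_
        · calc (∑' (m : ℕ) (k : ℕ),
                ENNReal.ofReal (A m) ^ (1 + 1 / s) * (2 : ℝ≥0∞) ^ (-(m : ℝ) / s)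
                  * t ^ (m - k + (k - m)))
              = ∑' m : ℕ, ENNReal.ofReal (A m) ^ (1 + 1 / s) * (2 : ℝ≥0∞) ^ (-(m : ℝ) / s)
                  * ∑' k : ℕ, t ^ (m - k + (k - m)) :=
                tsum_congr fun m => ENNReal.tsum_mul_left
            _ ≤ ∑' m : ℕ, ENNReal.ofReal (A m) ^ (1 + 1 / s) * (2 : ℝ≥0∞) ^ (-(m : ℝ) / s)
                  * (2 * (1 - t)⁻¹) :=
                ENNReal.tsum_le_tsum fun m => mul_le_mul_right (geom_dist_tsum_le t m) _
            _ = _ := ENNReal.tsum_mul_right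
        · calc (∑' (m : ℕ) (k : ℕ),
                ENNReal.ofReal (B k) ^ (1 + 1 / s) * (2 : ℝ≥0∞) ^ (-(k : ℝ) / s)
                  * t ^ (m - k + (k - m)))
              = ∑' (k : ℕ) (m : ℕ),
                ENNReal.ofReal (B k) ^ (1 + 1 / s) * (2 : ℝ≥0∞) ^ (-(k : ℝ) / s)
                  * t ^ (m - k + (k - m)) := ENNReal.tsum_comm
            _ = ∑' k : ℕ, ENNReal.ofReal (B k) ^ (1 + 1 / s) * (2 : ℝ≥0∞) ^ (-(k : ℝ) / s)
                  * ∑' m : ℕ, t ^ (m - k + (k - m)) :=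
                tsum_congr fun k => ENNReal.tsum_mul_left
            _ = ∑' k : ℕ, ENNReal.ofReal (B k) ^ (1 + 1 / s) * (2 : ℝ≥0∞) ^ (-(k : ℝ) / s)
                  * ∑' m : ℕ, t ^ (k - m + (m - k)) := by
                refine tsum_congr fun k => ?_
                congr 1
                refine tsum_congr fun m => ?_
                congr 1
                omega
            _ ≤ ∑' k : ℕ, ENNReal.ofReal (B k) ^ (1 + 1 / s) * (2 : ℝ≥0∞) ^ (-(k : ℝ) / s)
                  * (2 * (1 - t)⁻¹) :=
                ENNReal.tsum_le_tsum fun k => mul_le_mul_right (geom_dist_tsum_le t k) _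
            _ = _ := ENNReal.tsum_mul_right
    _ ≤ (max (∑' m : ℕ, ENNReal.ofReal (A m) ^ (1 + 1 / s) * (2 : ℝ≥0∞) ^ (-(m : ℝ) / s))
             (∑' k : ℕ, ENNReal.ofReal (B k) ^ (1 + 1 / s) * (2 : ℝ≥0∞) ^ (-(k : ℝ) / s))
          * (2 * (1 - t)⁻¹))
        + (max (∑' m : ℕ, ENNReal.ofReal (A m) ^ (1 + 1 / s) * (2 : ℝ≥0∞) ^ (-(m : ℝ) / s))
             (∑' k : ℕ, ENNReal.ofReal (B k) ^ (1 + 1 / s) * (2 : ℝ≥0∞) ^ (-(k : ℝ) / s))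
          * (2 * (1 - t)⁻¹)) :=
        add_le_add (mul_le_mul_left (le_max_left _ _) _)
          (mul_le_mul_left (le_max_right _ _) _)
    _ = C0 * max (∑' m : ℕ, ENNReal.ofReal (A m) ^ (1 + 1 / s) * (2 : ℝ≥0∞) ^ (-(m : ℝ) / s))
             (∑' k : ℕ, ENNReal.ofReal (B k) ^ (1 + 1 / s) * (2 : ℝ≥0∞) ^ (-(k : ℝ) / s)) := by
        rw [hC0]; ring
    _ ≤ _ := mul_le_mul_right le_self_add _
end

section
/- Let s ≥ 1, d ≥ 1, and let (N_m)_{m∈ℕ^d} be a family of positive real numbers indexed by multi-indices m = (m_1,…,m_d) ∈ ℕ^d such that ∑_{m∈ℕ^d} N_m^{1+1/s} 2^{−|m|/s} < ∞, where |m| = m_1 + ⋯ + m_d. Then ∑_{m∈ℕ^d} N_m ∑_{k∈ℕ^d} N_k^{1/s} ( ∏_{i=1}^d 1/(2^{m_i} + 2^{k_i}) )^{1/s} < ∞. -/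
open ENNReal

/-- `2 ^ (sum) = prod of 2 ^ exponents` in `ℝ≥0∞`. -/
lemma two_rpow_sum {ι : Type*} (t : Finset ι) (f : ι → ℝ) :
    (2 : ℝ≥0∞) ^ (∑ i ∈ t, f i) = ∏ i ∈ t, (2 : ℝ≥0∞) ^ (f i) := by
  induction t using Finset.cons_induction with
  | empty => simp
  | cons a t ha ih =>
      rw [Finset.sum_cons, Finset.prod_cons, ENNReal.rpow_add _ _ two_ne_zero ENNReal.ofNat_ne_top,
        ih]

/-- tsum over a pi type of a product factors as a product of tsums (ℝ≥0∞). -/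
lemma tsum_pi_prod : ∀ {d : ℕ} (g : Fin d → ℕ → ℝ≥0∞),
    ∑' k : Fin d → ℕ, ∏ i, g i (k i) = ∏ i, ∑' n : ℕ, g i n := by
  intro d
  induction d with
  | zero =>
      intro g
      rw [tsum_eq_single (fun i => i.elim0)
        (by intro b hb; exact absurd (funext fun i => i.elim0) hb)]
      simp
  | succ n ih =>
      intro g
      rw [← (Fin.consEquiv (fun _ : Fin (n + 1) => ℕ)).tsum_eq, Fin.prod_univ_succ]
      have key : ∀ p : ℕ × (Fin n → ℕ),
          (∏ i, g i ((Fin.consEquiv (fun _ => ℕ)) p i)) =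
            g 0 p.1 * ∏ i : Fin n, g i.succ (p.2 i) := by
        intro p
        rw [Fin.prod_univ_succ]
        simp [Fin.consEquiv]
      calc ∑' p : ℕ × (Fin n → ℕ), ∏ i, g i ((Fin.consEquiv (fun _ => ℕ)) p i)
          = ∑' p : ℕ × (Fin n → ℕ), g 0 p.1 * ∏ i : Fin n, g i.succ (p.2 i) :=
            tsum_congr key
        _ = ∑' a : ℕ, ∑' b : Fin n → ℕ, g 0 a * ∏ i : Fin n, g i.succ (b i) :=
            ENNReal.tsum_prod'
        _ = ∑' a : ℕ, g 0 a * ∑' b : Fin n → ℕ, ∏ i : Fin n, g i.succ (b i) :=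
            tsum_congr fun a => ENNReal.tsum_mul_left
        _ = (∑' a : ℕ, g 0 a) * ∑' b : Fin n → ℕ, ∏ i : Fin n, g i.succ (b i) :=
            ENNReal.tsum_mul_right
        _ = (∑' a : ℕ, g 0 a) * ∏ i : Fin n, ∑' m : ℕ, g i.succ m := by
            rw [ih (fun i => g i.succ)]

/-- one-dimensional convolution-type bound. -/
lemma coord_sum_le (δ : ℝ) (x : ℕ) :
    ∑' n : ℕ, (2 : ℝ≥0∞) ^ (-(δ * |(x : ℝ) - (n : ℝ)|)) ≤
      2 * ∑' j : ℕ, (2 : ℝ≥0∞) ^ (-(δ * (j : ℝ))) := by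
  set f : ℕ → ℝ≥0∞ := fun n => (2 : ℝ≥0∞) ^ (-(δ * |(x : ℝ) - (n : ℝ)|)) with hf
  set g : ℕ → ℝ≥0∞ := fun j => (2 : ℝ≥0∞) ^ (-(δ * (j : ℝ))) with hg
  set S : Set ℕ := {n | n ≤ x} with hS
  have hsplit : (∑' n : S, f n) + (∑' n : ↥Sᶜ, f n) = ∑' n, f n :=
    Summable.tsum_add_tsum_compl ENNReal.summable ENNReal.summable
  have h1 : (∑' n : S, f n) ≤ ∑' j, g j := by
    have hinj : Function.Injective (fun n : S => x - (n : ℕ)) := by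
      rintro ⟨a, ha⟩ ⟨b, hb⟩ h
      have ha' : a ≤ x := ha
      have hb' : b ≤ x := hb
      simp only [Subtype.mk.injEq] at h ⊢
      omega
    have heq : ∀ n : S, f n = g (x - (n : ℕ)) := by
      rintro ⟨n, hn⟩
      have hn' : n ≤ x := hn
      simp only [hf, hg]
      congr 2
      rw [Nat.cast_sub hn']
      rw [abs_of_nonneg (by
        have : (n : ℝ) ≤ (x : ℝ) := by exact_mod_cast hn'
        linarith)]
    calc (∑' n : S, f n) = ∑' n : S, g (x - (n : ℕ)) := tsum_congr heq
      _ ≤ ∑' j, g j := ENNReal.tsum_comp_le_tsum_of_injective hinj g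
  have h2 : (∑' n : ↥Sᶜ, f n) ≤ ∑' j, g j := by
    have hinj : Function.Injective (fun n : ↥Sᶜ => (n : ℕ) - x) := by
      rintro ⟨a, ha⟩ ⟨b, hb⟩ h
      simp only [hS, Set.mem_compl_iff, Set.mem_setOf_eq, not_le] at ha hb
      simp only [Subtype.mk.injEq] at h ⊢
      omega
    have heq : ∀ n : ↥Sᶜ, f n = g ((n : ℕ) - x) := by
      rintro ⟨n, hn⟩
      simp only [hS, Set.mem_compl_iff, Set.mem_setOf_eq, not_le] at hn
      have hn' : x ≤ n := le_of_lt hn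
      simp only [hf, hg]
      congr 2
      rw [Nat.cast_sub hn']
      rw [abs_of_nonpos (by
        have : (x : ℝ) ≤ (n : ℝ) := by exact_mod_cast hn'
        linarith)]
      ring
    calc (∑' n : ↥Sᶜ, f n) = ∑' n : ↥Sᶜ, g ((n : ℕ) - x) := tsum_congr heq
      _ ≤ ∑' j, g j := ENNReal.tsum_comp_le_tsum_of_injective hinj g
  calc ∑' n, f n = (∑' n : S, f n) + (∑' n : ↥Sᶜ, f n) := hsplit.symm
    _ ≤ (∑' j, g j) + (∑' j, g j) := add_le_add h1 h2
    _ = 2 * ∑' j, g j := (two_mul _).symm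

/-- geometric series finiteness. -/
lemma geom_lt_top {δ : ℝ} (hδ : 0 < δ) :
    (∑' j : ℕ, (2 : ℝ≥0∞) ^ (-(δ * (j : ℝ)))) < ⊤ := by
  have h : ∀ j : ℕ, (2 : ℝ≥0∞) ^ (-(δ * (j : ℝ))) = ((2 : ℝ≥0∞) ^ (-δ)) ^ j := by
    intro j
    rw [← ENNReal.rpow_natCast ((2 : ℝ≥0∞) ^ (-δ)) j, ← ENNReal.rpow_mul]
    ring_nf
  simp_rw [h]
  rw [ENNReal.tsum_geometric]
  have hlt : (2 : ℝ≥0∞) ^ (-δ) < 1 :=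
    ENNReal.rpow_lt_one_of_one_lt_of_neg one_lt_two (neg_neg_of_pos hδ)
  rw [ENNReal.inv_lt_top]
  exact tsub_pos_of_lt hlt

/-- Young-type: `X * Y ≤ X ^ p + Y ^ q` for conjugate exponents. -/
lemma young_add {p q : ℝ} (hpq : Real.HolderConjugate p q) (X Y : ℝ≥0∞) :
    X * Y ≤ X ^ p + Y ^ q := by
  refine (ENNReal.young_inequality X Y hpq).trans (add_le_add ?_ ?_)
  · rw [ENNReal.div_eq_inv_mul]
    calc (ENNReal.ofReal p)⁻¹ * X ^ p ≤ 1 * X ^ p := by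
          gcongr
          rw [ENNReal.inv_le_one]
          exact ENNReal.one_le_ofReal.2 hpq.lt.le
      _ = X ^ p := one_mul _
  · rw [ENNReal.div_eq_inv_mul]
    calc (ENNReal.ofReal q)⁻¹ * Y ^ q ≤ 1 * Y ^ q := by
          gcongr
          rw [ENNReal.inv_le_one]
          exact ENNReal.one_le_ofReal.2 hpq.symm.lt.le
      _ = Y ^ q := one_mul _

/-- convolution exponent inequality. -/
lemma conv_exp_ineq {c δ : ℝ} (h0 : 0 ≤ δ) (h1 : δ ≤ c) (x y : ℝ) :
    c * x + δ * |x - y| ≤ c * y + (c + δ) * |x - y| := by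
  rcases le_total x y with h | h
  · rw [abs_of_nonpos (by linarith)]
    nlinarith
  · rw [abs_of_nonneg (by linarith)]
    nlinarith

/-- max via abs. -/
lemma real_max_eq (a b : ℝ) : max a b = (a + b + |a - b|) / 2 := by
  rcases le_total a b with h | h
  · rw [max_eq_right h, abs_of_nonpos (by linarith)]; ring
  · rw [max_eq_left h, abs_of_nonneg (by linarith)]; ring

/-- Let `s ≥ 1`, `d ≥ 1` and `(N_m)_{m ∈ ℕ^d}` positive with
`∑_m N_m^{1+1/s} 2^{-|m|/s} < ∞`.  Then
`∑_m N_m ∑_k N_k^{1/s} (∏_i 1/(2^{m_i} + 2^{k_i}))^{1/s} < ∞`. -/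
theorem diagonal_double_sum_multiindex (s : ℝ) (hs : 1 ≤ s) (d : ℕ) (hd : 1 ≤ d)
    (N : (Fin d → ℕ) → ℝ) (hN : ∀ m, 0 < N m)
    (hsum : ∑' m : Fin d → ℕ,
        ENNReal.ofReal (N m) ^ (1 + 1 / s) * (2 : ℝ≥0∞) ^ (-(∑ i, (m i : ℝ)) / s) < ⊤) :
    ∑' m : Fin d → ℕ, ENNReal.ofReal (N m) *
      ∑' k : Fin d → ℕ, ENNReal.ofReal (N k) ^ (1 / s) *
        (∏ i, ((2 : ℝ≥0∞) ^ (m i) + (2 : ℝ≥0∞) ^ (k i))⁻¹) ^ (1 / s) < ⊤ := by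
  have hs0 : (0 : ℝ) < s := lt_of_lt_of_le one_pos hs
  have hs0' : s ≠ 0 := ne_of_gt hs0
  have hs1 : s + 1 ≠ 0 := by positivity
  set Sm : (Fin d → ℕ) → ℝ := fun m => ∑ i, (m i : ℝ) with hSm
  set T : (Fin d → ℕ) → (Fin d → ℕ) → ℝ := fun m k => ∑ i, |(m i : ℝ) - (k i : ℝ)| with hT
  set A : (Fin d → ℕ) → ℝ≥0∞ :=
    fun m => ENNReal.ofReal (N m) ^ (1 + 1 / s) * (2 : ℝ≥0∞) ^ (-(Sm m) / s) with hA
  set δa : ℝ := 1 / (4 * s ^ 2) with hδa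
  set δb : ℝ := 1 / (4 * s) with hδb
  have hδa0 : 0 < δa := by rw [hδa]; positivity
  have hδb0 : 0 < δb := by rw [hδb]; positivity
  set G : ℝ → (Fin d → ℕ) → (Fin d → ℕ) → ℝ≥0∞ :=
    fun δ m k => (2 : ℝ≥0∞) ^ (-(δ * T m k)) with hG
  set Ea : (Fin d → ℕ) → (Fin d → ℕ) → ℝ :=
    fun m k => (2 * s + 1) / (4 * s ^ 2) * Sm m + (2 * s - 1) / (4 * s ^ 2) * Sm k
      + 1 / (2 * s) * T m k with hEa
  set Eb : (Fin d → ℕ) → (Fin d → ℕ) → ℝ :=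
    fun m k => 1 / (4 * s) * Sm m + 3 / (4 * s) * Sm k + 1 / (2 * s) * T m k with hEb
  have hpq : Real.HolderConjugate (1 + 1 / s) (s + 1) := by
    rw [Real.holderConjugate_iff]
    constructor
    · nlinarith [one_div_pos.2 hs0]
    · rw [inv_eq_one_div, inv_eq_one_div]
      field_simp
  -- a generic convolution-type sum inequality
  have hsumT : ∀ (c δ : ℝ), 0 ≤ δ → δ ≤ c → ∀ u v : Fin d → ℕ,
      c * Sm u + δ * T u v ≤ c * Sm v + (c + δ) * T u v := by
    intro c δ h0 h1 u v
    rw [hSm, hT]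
    simp only
    rw [Finset.mul_sum, Finset.mul_sum, Finset.mul_sum, Finset.mul_sum,
      ← Finset.sum_add_distrib, ← Finset.sum_add_distrib]
    exact Finset.sum_le_sum fun i _ => conv_exp_ineq h0 h1 _ _
  have hTsymm : ∀ u v : Fin d → ℕ, T u v = T v u := by
    intro u v
    rw [hT]
    exact Finset.sum_congr rfl fun i _ => abs_sub_comm _ _
  -- pointwise bound
  have main : ∀ m k : Fin d → ℕ,
      ENNReal.ofReal (N m) * (ENNReal.ofReal (N k) ^ (1 / s) *
        (∏ i, ((2 : ℝ≥0∞) ^ (m i) + (2 : ℝ≥0∞) ^ (k i))⁻¹) ^ (1 / s)) ≤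
      A m * G δa m k + A k * G δb m k := by
    intro m k
    set Mx : ℝ := ∑ i, max ((m i : ℝ)) ((k i : ℝ)) with hMx
    have hMxeq : Mx = (Sm m + Sm k + T m k) / 2 := by
      rw [hMx, hSm, hT]
      simp only
      rw [show (∑ i, max ((m i : ℝ)) ((k i : ℝ)))
            = ∑ i, (((m i : ℝ) + (k i : ℝ) + |(m i : ℝ) - (k i : ℝ)|) / 2) from
          Finset.sum_congr rfl fun i _ => real_max_eq _ _,
        ← Finset.sum_div, Finset.sum_add_distrib, Finset.sum_add_distrib]
    have hker : (∏ i, ((2 : ℝ≥0∞) ^ (m i) + (2 : ℝ≥0∞) ^ (k i))⁻¹) ≤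
        (2 : ℝ≥0∞) ^ (-Mx) := by
      have h2 : (2 : ℝ≥0∞) ^ (-Mx) = ∏ i, (2 : ℝ≥0∞) ^ (-(max ((m i : ℝ)) ((k i : ℝ)))) := by
        rw [hMx, ← Finset.sum_neg_distrib, two_rpow_sum]
      rw [h2]
      refine Finset.prod_le_prod' fun i _ => ?_
      have hmax : (2 : ℝ≥0∞) ^ (max ((m i : ℝ)) ((k i : ℝ))) ≤
          (2 : ℝ≥0∞) ^ (m i) + (2 : ℝ≥0∞) ^ (k i) := by
        rcases le_total (m i) (k i) with h | h
        · rw [max_eq_right (by exact_mod_cast h : (m i : ℝ) ≤ (k i : ℝ)),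
            ENNReal.rpow_natCast]
          exact le_add_self
        · rw [max_eq_left (by exact_mod_cast h : (k i : ℝ) ≤ (m i : ℝ)),
            ENNReal.rpow_natCast]
          exact le_add_right (le_refl _)
      rw [ENNReal.rpow_neg]
      exact ENNReal.inv_le_inv' hmax
    have hker2 : (∏ i, ((2 : ℝ≥0∞) ^ (m i) + (2 : ℝ≥0∞) ^ (k i))⁻¹) ^ (1 / s) ≤
        (2 : ℝ≥0∞) ^ (-(Mx / s)) := by
      calc (∏ i, ((2 : ℝ≥0∞) ^ (m i) + (2 : ℝ≥0∞) ^ (k i))⁻¹) ^ (1 / s)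
          ≤ ((2 : ℝ≥0∞) ^ (-Mx)) ^ (1 / s) :=
            ENNReal.rpow_le_rpow hker (by positivity)
        _ = (2 : ℝ≥0∞) ^ (-(Mx / s)) := by
            rw [← ENNReal.rpow_mul]
            congr 1
            field_simp
    have hsplit : (2 : ℝ≥0∞) ^ (-(Mx / s)) =
        (2 : ℝ≥0∞) ^ (-(s / (s + 1) * Ea m k)) * (2 : ℝ≥0∞) ^ (-(1 / (s + 1) * Eb m k)) := by
      rw [← ENNReal.rpow_add _ _ two_ne_zero ENNReal.ofNat_ne_top]
      congr 1
      rw [hMxeq, hEa, hEb]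
      simp only
      field_simp
      ring
    set X : ℝ≥0∞ := ENNReal.ofReal (N m) * (2 : ℝ≥0∞) ^ (-(s / (s + 1) * Ea m k)) with hX
    set Y : ℝ≥0∞ := ENNReal.ofReal (N k) ^ (1 / s) * (2 : ℝ≥0∞) ^ (-(1 / (s + 1) * Eb m k))
      with hY
    have step1 : ENNReal.ofReal (N m) * (ENNReal.ofReal (N k) ^ (1 / s) *
        (∏ i, ((2 : ℝ≥0∞) ^ (m i) + (2 : ℝ≥0∞) ^ (k i))⁻¹) ^ (1 / s)) ≤ X * Y := by
      calc ENNReal.ofReal (N m) * (ENNReal.ofReal (N k) ^ (1 / s) *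
          (∏ i, ((2 : ℝ≥0∞) ^ (m i) + (2 : ℝ≥0∞) ^ (k i))⁻¹) ^ (1 / s))
          ≤ ENNReal.ofReal (N m) * (ENNReal.ofReal (N k) ^ (1 / s) *
            (2 : ℝ≥0∞) ^ (-(Mx / s))) := by gcongr
        _ = X * Y := by rw [hsplit, hX, hY]; ring
    have step2 : X * Y ≤ X ^ (1 + 1 / s) + Y ^ (s + 1) := young_add hpq X Y
    have hXp : X ^ (1 + 1 / s) =
        ENNReal.ofReal (N m) ^ (1 + 1 / s) * (2 : ℝ≥0∞) ^ (-Ea m k) := by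
      rw [hX, ENNReal.mul_rpow_of_nonneg _ _ (by positivity)]
      congr 1
      rw [← ENNReal.rpow_mul]
      congr 1
      field_simp
    have hYq : Y ^ (s + 1) =
        ENNReal.ofReal (N k) ^ (1 + 1 / s) * (2 : ℝ≥0∞) ^ (-Eb m k) := by
      rw [hY, ENNReal.mul_rpow_of_nonneg _ _ (by positivity)]
      congr 1
      · rw [← ENNReal.rpow_mul]
        congr 1
        field_simp
      · rw [← ENNReal.rpow_mul]
        congr 1
        field_simp
    have hEa_ge : Sm m / s + δa * T m k ≤ Ea m k := by
      have h := hsumT ((2 * s - 1) / (4 * s ^ 2)) δa (le_of_lt hδa0)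
        (by rw [hδa, div_le_div_iff₀ (by positivity) (by positivity)]; nlinarith) m k
      have h2 : (2 * s - 1) / (4 * s ^ 2) + δa = 1 / (2 * s) := by
        rw [hδa]; field_simp; ring
      rw [h2] at h
      have h3 : Sm m / s = (2 * s + 1) / (4 * s ^ 2) * Sm m
          + (2 * s - 1) / (4 * s ^ 2) * Sm m := by field_simp; ring
      rw [hEa]
      simp only
      linarith
    have hEb_ge : Sm k / s + δb * T m k ≤ Eb m k := by
      have h := hsumT (1 / (4 * s)) δb (le_of_lt hδb0) (by rw [hδb]) k m
      rw [hTsymm k m] at h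
      have h2 : (1 : ℝ) / (4 * s) + δb = 1 / (2 * s) := by
        rw [hδb]; field_simp; ring
      rw [h2] at h
      have h3 : Sm k / s = 3 / (4 * s) * Sm k + 1 / (4 * s) * Sm k := by field_simp; ring
      rw [hEb]
      simp only
      linarith
    have hXA : ENNReal.ofReal (N m) ^ (1 + 1 / s) * (2 : ℝ≥0∞) ^ (-Ea m k) ≤
        A m * G δa m k := by
      rw [hA, hG]
      simp only
      rw [mul_assoc]
      gcongr
      calc (2 : ℝ≥0∞) ^ (-Ea m k) ≤ (2 : ℝ≥0∞) ^ (-(Sm m / s + δa * T m k)) :=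
            ENNReal.rpow_le_rpow_of_exponent_le one_le_two (neg_le_neg hEa_ge)
        _ = (2 : ℝ≥0∞) ^ (-(Sm m) / s) * (2 : ℝ≥0∞) ^ (-(δa * T m k)) := by
            rw [← ENNReal.rpow_add _ _ two_ne_zero ENNReal.ofNat_ne_top]
            congr 1
            ring
    have hYA : ENNReal.ofReal (N k) ^ (1 + 1 / s) * (2 : ℝ≥0∞) ^ (-Eb m k) ≤
        A k * G δb m k := by
      rw [hA, hG]
      simp only
      rw [mul_assoc]
      gcongr
      calc (2 : ℝ≥0∞) ^ (-Eb m k) ≤ (2 : ℝ≥0∞) ^ (-(Sm k / s + δb * T m k)) :=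
            ENNReal.rpow_le_rpow_of_exponent_le one_le_two (neg_le_neg hEb_ge)
        _ = (2 : ℝ≥0∞) ^ (-(Sm k) / s) * (2 : ℝ≥0∞) ^ (-(δb * T m k)) := by
            rw [← ENNReal.rpow_add _ _ two_ne_zero ENNReal.ofNat_ne_top]
            congr 1
            ring
    calc ENNReal.ofReal (N m) * (ENNReal.ofReal (N k) ^ (1 / s) *
        (∏ i, ((2 : ℝ≥0∞) ^ (m i) + (2 : ℝ≥0∞) ^ (k i))⁻¹) ^ (1 / s))
        ≤ X * Y := step1
      _ ≤ X ^ (1 + 1 / s) + Y ^ (s + 1) := step2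
      _ = ENNReal.ofReal (N m) ^ (1 + 1 / s) * (2 : ℝ≥0∞) ^ (-Ea m k)
          + ENNReal.ofReal (N k) ^ (1 + 1 / s) * (2 : ℝ≥0∞) ^ (-Eb m k) := by
          rw [hXp, hYq]
      _ ≤ A m * G δa m k + A k * G δb m k := add_le_add hXA hYA
  -- bound on sums of G
  have hGbound : ∀ (δ : ℝ), 0 < δ → ∀ m : Fin d → ℕ,
      (∑' k : Fin d → ℕ, G δ m k) ≤ (2 * ∑' j : ℕ, (2 : ℝ≥0∞) ^ (-(δ * (j : ℝ)))) ^ d := by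
    intro δ hδ m
    have hfact : ∀ k : Fin d → ℕ,
        G δ m k = ∏ i, (2 : ℝ≥0∞) ^ (-(δ * |(m i : ℝ) - (k i : ℝ)|)) := by
      intro k
      rw [hG, hT]
      simp only
      rw [Finset.mul_sum, ← Finset.sum_neg_distrib, two_rpow_sum]
    calc (∑' k : Fin d → ℕ, G δ m k)
        = ∑' k : Fin d → ℕ, ∏ i, (2 : ℝ≥0∞) ^ (-(δ * |(m i : ℝ) - (k i : ℝ)|)) :=
          tsum_congr hfact
      _ = ∏ i, ∑' n : ℕ, (2 : ℝ≥0∞) ^ (-(δ * |(m i : ℝ) - (n : ℝ)|)) :=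
          tsum_pi_prod (fun i n => (2 : ℝ≥0∞) ^ (-(δ * |(m i : ℝ) - (n : ℝ)|)))
      _ ≤ ∏ _i : Fin d, (2 * ∑' j : ℕ, (2 : ℝ≥0∞) ^ (-(δ * (j : ℝ)))) :=
          Finset.prod_le_prod' fun i _ => coord_sum_le δ (m i)
      _ = (2 * ∑' j : ℕ, (2 : ℝ≥0∞) ^ (-(δ * (j : ℝ)))) ^ d := by
          rw [Finset.prod_const, Finset.card_univ, Fintype.card_fin]
  have hCfin : ∀ (δ : ℝ), 0 < δ →
      (2 * ∑' j : ℕ, (2 : ℝ≥0∞) ^ (-(δ * (j : ℝ)))) ^ d < ⊤ := by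
    intro δ hδ
    refine ENNReal.pow_lt_top ?_
    exact ENNReal.mul_lt_top (by norm_num) (geom_lt_top hδ)
  have hAsum : (∑' m : Fin d → ℕ, A m) < ⊤ := hsum
  -- assemble
  have hrw : (∑' m : Fin d → ℕ, ENNReal.ofReal (N m) *
      ∑' k : Fin d → ℕ, ENNReal.ofReal (N k) ^ (1 / s) *
        (∏ i, ((2 : ℝ≥0∞) ^ (m i) + (2 : ℝ≥0∞) ^ (k i))⁻¹) ^ (1 / s))
      = ∑' m : Fin d → ℕ, ∑' k : Fin d → ℕ,
          ENNReal.ofReal (N m) * (ENNReal.ofReal (N k) ^ (1 / s) *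
            (∏ i, ((2 : ℝ≥0∞) ^ (m i) + (2 : ℝ≥0∞) ^ (k i))⁻¹) ^ (1 / s)) :=
    tsum_congr fun m => ENNReal.tsum_mul_left.symm
  rw [hrw]
  have hbound : ∑' m : Fin d → ℕ, ∑' k : Fin d → ℕ,
      (ENNReal.ofReal (N m) * (ENNReal.ofReal (N k) ^ (1 / s) *
        (∏ i, ((2 : ℝ≥0∞) ^ (m i) + (2 : ℝ≥0∞) ^ (k i))⁻¹) ^ (1 / s)))
      ≤ (∑' m : Fin d → ℕ, ∑' k : Fin d → ℕ, A m * G δa m k)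
        + ∑' m : Fin d → ℕ, ∑' k : Fin d → ℕ, A k * G δb m k := by
    rw [← ENNReal.tsum_add]
    refine ENNReal.tsum_le_tsum fun m => ?_
    rw [← ENNReal.tsum_add]
    exact ENNReal.tsum_le_tsum fun k => main m k
  refine lt_of_le_of_lt hbound ?_
  rw [ENNReal.add_lt_top]
  constructor
  · have : ∑' m : Fin d → ℕ, ∑' k : Fin d → ℕ, A m * G δa m k
        ≤ (∑' m : Fin d → ℕ, A m) * (2 * ∑' j : ℕ, (2 : ℝ≥0∞) ^ (-(δa * (j : ℝ)))) ^ d := by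
      rw [← ENNReal.tsum_mul_right]
      refine ENNReal.tsum_le_tsum fun m => ?_
      rw [ENNReal.tsum_mul_left]
      exact mul_le_mul_right (hGbound δa hδa0 m) _
    exact lt_of_le_of_lt this (ENNReal.mul_lt_top hAsum (hCfin δa hδa0))
  · have hswap : ∑' m : Fin d → ℕ, ∑' k : Fin d → ℕ, A k * G δb m k
        = ∑' k : Fin d → ℕ, ∑' m : Fin d → ℕ, A k * G δb m k := ENNReal.tsum_comm
    rw [hswap]
    have : ∑' k : Fin d → ℕ, ∑' m : Fin d → ℕ, A k * G δb m k
        ≤ (∑' k : Fin d → ℕ, A k) * (2 * ∑' j : ℕ, (2 : ℝ≥0∞) ^ (-(δb * (j : ℝ)))) ^ d := by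
      rw [← ENNReal.tsum_mul_right]
      refine ENNReal.tsum_le_tsum fun k => ?_
      rw [ENNReal.tsum_mul_left]
      refine mul_le_mul_right ?_ _
      have hGsymm : ∀ m : Fin d → ℕ, G δb m k = G δb k m := by
        intro m
        rw [hG]
        simp only
        rw [hTsymm m k]
      calc (∑' m : Fin d → ℕ, G δb m k) = ∑' m : Fin d → ℕ, G δb k m :=
            tsum_congr hGsymm
        _ ≤ _ := hGbound δb hδb0 k
    exact lt_of_le_of_lt this (ENNReal.mul_lt_top hAsum (hCfin δb hδb0))
end

section
/- Fix d ≥ 1 and let (X^i_{n,j})_{n,j∈ℕ}, for i = 1,…,d, be families of nonnegative random variables on a probability space (Ω,𝒜,ℙ). Set m(n,j) = min_{i=1,…,d} X^i_{n,j} and p(n,j) = ∏_{i=1}^d X^i_{n,j}. If ∑_{j∈ℕ} ( ∑_{k∈ℕ} 𝔼(p(k,j)) )^{1/d} < ∞, then the random variable sup_{n∈ℕ} ∑_{j≠n} m(n,j) is finite almost surely. -/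
open MeasureTheory ENNReal

/-- Jensen's inequality for `x ↦ x^(1/d)` on a probability measure:
`∫ g^(1/d) ≤ (∫ g)^(1/d)`, proved via Hölder's inequality. -/
theorem jensen_rpow_aux {Ω : Type*} [MeasurableSpace Ω] (P : Measure Ω)
    [IsProbabilityMeasure P] (d : ℕ) (hd : 1 ≤ d) {g : Ω → ℝ≥0∞}
    (hg : Measurable g) :
    ∫⁻ ω, (g ω) ^ ((1:ℝ)/d) ∂P ≤ (∫⁻ ω, g ω ∂P) ^ ((1:ℝ)/d) := by
  rcases eq_or_lt_of_le hd with h1 | h2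
  · simp [← h1]
  · have hd1 : (1:ℝ) < d := by exact_mod_cast h2
    have hpq : (d:ℝ).HolderConjugate (Real.conjExponent d) :=
      Real.HolderConjugate.conjExponent hd1
    have hf : AEMeasurable (fun ω => (g ω) ^ ((1:ℝ)/d)) P :=
      (hg.pow_const _).aemeasurable
    have := ENNReal.lintegral_mul_le_Lp_mul_Lq P hpq hf aemeasurable_const
      (g := fun _ => (1:ℝ≥0∞))
    simpa [← ENNReal.rpow_natCast, ← ENNReal.rpow_mul,
      one_div, inv_mul_cancel₀ (by positivity : (d:ℝ) ≠ 0)] using this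

/-- Let `(X^i_{n,j})` be nonnegative random variables, `i = 1,…,d`,
`m(n,j) = min_i X^i_{n,j}`, `p(n,j) = ∏_i X^i_{n,j}`.  If
`∑_j (∑_k 𝔼(p(k,j)))^{1/d} < ∞` then `sup_n ∑_{j ≠ n} m(n,j)` is finite almost surely. -/
theorem sup_min_sum_finite_ae {Ω : Type*} [MeasurableSpace Ω] (P : Measure Ω)
    [IsProbabilityMeasure P] (d : ℕ) (hd : 1 ≤ d)
    (X : Fin d → ℕ → ℕ → Ω → ℝ)
    (hX_nonneg : ∀ i n j ω, 0 ≤ X i n j ω)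
    (hX_meas : ∀ i n j, Measurable (X i n j))
    (hsum : ∑' j : ℕ,
        (∑' k : ℕ, ∫⁻ ω, ENNReal.ofReal (∏ i, X i k j ω) ∂P) ^ ((1 : ℝ) / d) < ⊤) :
    ∀ᵐ ω ∂P,
      (⨆ n : ℕ, ∑' j : ℕ,
        if j = n then 0 else ENNReal.ofReal (⨅ i, X i n j ω)) < ⊤ := by
  haveI : NeZero d := ⟨by omega⟩
  set G : ℕ → Ω → ℝ≥0∞ := fun j ω => ∑' k, ENNReal.ofReal (∏ i, X i k j ω) with hG
  have hprod_meas : ∀ k j, Measurable fun ω => ENNReal.ofReal (∏ i, X i k j ω) := by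
    intro k j
    exact (Finset.measurable_prod _ fun i _ => hX_meas i k j).ennreal_ofReal
  have hGmeas : ∀ j, Measurable (G j) := fun j =>
    Measurable.ennreal_tsum fun k => hprod_meas k j
  -- pointwise bound: inf ≤ (prod)^(1/d) ≤ (G j ω)^(1/d)
  have hpt : ∀ n j ω, ENNReal.ofReal (⨅ i, X i n j ω) ≤ (G j ω) ^ ((1:ℝ)/d) := by
    intro n j ω
    have hbdd : BddBelow (Set.range fun i => X i n j ω) :=
      (Set.finite_range _).bddBelow
    have hm0 : 0 ≤ ⨅ i, X i n j ω := le_ciInf fun i => hX_nonneg i n j ω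
    have hle : (⨅ i, X i n j ω) ^ d ≤ ∏ i, X i n j ω := by
      calc (⨅ i, X i n j ω) ^ d = ∏ _i : Fin d, ⨅ i, X i n j ω := by
            simp [Finset.prod_const]
        _ ≤ ∏ i, X i n j ω :=
            Finset.prod_le_prod (fun _ _ => hm0) (fun i _ => ciInf_le hbdd i)
    have h1 : ENNReal.ofReal (⨅ i, X i n j ω) ≤
        (ENNReal.ofReal (∏ i, X i n j ω)) ^ ((1:ℝ)/d) := by
      have : (ENNReal.ofReal (⨅ i, X i n j ω)) ^ (d:ℝ) ≤
          ENNReal.ofReal (∏ i, X i n j ω) := by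
        rw [ENNReal.ofReal_rpow_of_nonneg hm0 (by positivity), Real.rpow_natCast]
        exact ENNReal.ofReal_le_ofReal hle
      calc ENNReal.ofReal (⨅ i, X i n j ω)
          = ((ENNReal.ofReal (⨅ i, X i n j ω)) ^ (d:ℝ)) ^ ((1:ℝ)/d) := by
            rw [← ENNReal.rpow_mul, mul_one_div,
              div_self (by positivity : (d:ℝ) ≠ 0), ENNReal.rpow_one]
        _ ≤ (ENNReal.ofReal (∏ i, X i n j ω)) ^ ((1:ℝ)/d) :=
            ENNReal.rpow_le_rpow this (by positivity)
    refine h1.trans (ENNReal.rpow_le_rpow ?_ (by positivity))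
    exact ENNReal.le_tsum n
  -- the dominating function
  set F : Ω → ℝ≥0∞ := fun ω => ∑' j, (G j ω) ^ ((1:ℝ)/d) with hF
  have hFmeas : Measurable F :=
    Measurable.ennreal_tsum fun j => (hGmeas j).pow_const _
  have hFint : ∫⁻ ω, F ω ∂P < ⊤ := by
    rw [hF, lintegral_tsum fun j => ((hGmeas j).pow_const _).aemeasurable]
    refine lt_of_le_of_lt (ENNReal.tsum_le_tsum fun j => ?_) hsum
    refine (jensen_rpow_aux P d hd (hGmeas j)).trans ?_
    rw [lintegral_tsum fun k => (hprod_meas k j).aemeasurable]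
  filter_upwards [ae_lt_top hFmeas hFint.ne] with ω hω
  refine lt_of_le_of_lt (iSup_le fun n => ?_) hω
  refine ENNReal.tsum_le_tsum fun j => ?_
  split
  · exact zero_le
  · exact hpt n j ω
end

section
/- Let Λ be a random sequence in the polydisc 𝔻^d. There exist constants c_d, C_d > 0 depending only on d such that for all n ≠ j and all multi-indices m, k ∈ ℕ^d with λ_n ∈ I_m and λ_j ∈ I_k, one has c_d ∏_{i=1}^d 1/(2^{m_i}+2^{k_i}) ≤ 𝔼(|S_d(λ_n,λ_j)|²) ≤ C_d ∏_{i=1}^d 1/(2^{m_i}+2^{k_i}). -/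
open MeasureTheory ProbabilityTheory Complex Set ENNReal

noncomputable section

/-- A random sequence in the polydisc `𝔻^d`, indexed by `ι`: deterministic radii
`r n ∈ [0,1)^d` and arguments `θ n i` uniformly distributed on `[0, 2π)`, with the whole
family `{θ n i}` independent.  The random point is `λ_n(ω) = (r_n^i e^{i θ_n^i(ω)})_i`. -/
structure RandomPolydiscSeq (d : ℕ) (ι : Type*) (Ω : Type*) [MeasurableSpace Ω]
    (P : MeasureTheory.Measure Ω) where
  r : ι → Fin d → ℝ
  r_mem : ∀ n i, r n i ∈ Set.Ico (0 : ℝ) 1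
  θ : ι → Fin d → Ω → ℝ
  θ_meas : ∀ n i, Measurable (θ n i)
  θ_unif : ∀ n i, MeasureTheory.Measure.map (θ n i) P
      = (ENNReal.ofReal (2 * Real.pi))⁻¹ • volume.restrict (Set.Ico (0 : ℝ) (2 * Real.pi))
  θ_indep : iIndepFun (fun (p : ι × Fin d) ω => θ p.1 p.2 ω) P

namespace RandomPolydiscSeq

variable {d : ℕ} {ι Ω : Type*} [MeasurableSpace Ω] {P : MeasureTheory.Measure Ω}

/-- The random point `λ_n(ω) ∈ 𝔻^d`. -/
def pt (Λ : RandomPolydiscSeq d ι Ω P) (n : ι) (ω : Ω) : Fin d → ℂ :=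
  fun i => (Λ.r n i : ℂ) * Complex.exp (Complex.I * (Λ.θ n i ω : ℂ))

/-- `λ_n ∈ I_m`, i.e. `1 - 2^{-m_i} ≤ |λ_n^i| < 1 - 2^{-(m_i+1)}` for all `i`
(this depends only on the deterministic radii). -/
def inShell (Λ : RandomPolydiscSeq d ι Ω P) (n : ι) (m : Fin d → ℕ) : Prop :=
  ∀ i, 1 - (2 : ℝ) ^ (-(m i : ℤ)) ≤ Λ.r n i ∧ Λ.r n i < 1 - (2 : ℝ) ^ (-((m i : ℤ) + 1))

/-- `N_m = #(Λ ∩ I_m)`, as an extended nonnegative real. -/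
def N (Λ : RandomPolydiscSeq d ι Ω P) (m : Fin d → ℕ) : ℝ≥0∞ :=
  ({n : ι | Λ.inShell n m}).encard

end RandomPolydiscSeq

/-- The pseudo-hyperbolic distance `ρ(z,w) = |z-w| / |1 - z̄ w|` on the unit disc. -/
def pseudoHyp (z w : ℂ) : ℝ := ‖z - w‖ / ‖1 - (starRingEnd ℂ) z * w‖

/-- The Gleason distance `ρ_G(z,w) = max_i ρ(z^i, w^i)` on the polydisc. -/
def gleason {d : ℕ} (z w : Fin d → ℂ) : ℝ := ⨆ i, pseudoHyp (z i) (w i)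

/-- The normalized Szegö kernel on the polydisc. -/
def szego {d : ℕ} (z w : Fin d → ℂ) : ℂ :=
  ∏ i, ((Real.sqrt ((1 - ‖z i‖ ^ 2) * (1 - ‖w i‖ ^ 2)) : ℂ)
      / (1 - z i * (starRingEnd ℂ) (w i)))

namespace RandomPolydiscSeq

variable {d : ℕ} {ι Ω : Type*} [MeasurableSpace Ω] {P : MeasureTheory.Measure Ω}

/-- The realization `Λ(ω)` is weakly separated: `inf_{n ≠ k} ρ_G(λ_n, λ_k) > 0`. -/
def WeaklySeparated (Λ : RandomPolydiscSeq d ι Ω P) (ω : Ω) : Prop :=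
  ∃ c > 0, ∀ n k : ι, n ≠ k → c ≤ gleason (Λ.pt n ω) (Λ.pt k ω)

/-- The realization `Λ(ω)` is uniformly separated: `inf_n ∏_{k ≠ n} ρ_G(λ_n, λ_k) > 0`.
Since all factors lie in `[0,1)`, the infinite product is the infimum of the finite
partial products, so this is expressed via finite subproducts. -/
def UniformlySeparated (Λ : RandomPolydiscSeq d ι Ω P) (ω : Ω) : Prop :=
  ∃ c > 0, ∀ n : ι, ∀ F : Finset ι, n ∉ F →
    c ≤ ∏ k ∈ F, gleason (Λ.pt n ω) (Λ.pt k ω)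

/-- The realization `Λ(ω)` is interpolating for `H^∞(𝔻^d)`. -/
def InterpolatingHinf (Λ : RandomPolydiscSeq d ι Ω P) (ω : Ω) : Prop :=
  ∀ w : ι → ℂ, (∃ M : ℝ, ∀ n, ‖w n‖ ≤ M) →
    ∃ f : (Fin d → ℂ) → ℂ,
      DifferentiableOn ℂ f {ζ | ∀ i, ‖ζ i‖ < 1} ∧
      (∃ M : ℝ, ∀ ζ : Fin d → ℂ, (∀ i, ‖ζ i‖ < 1) → ‖f ζ‖ ≤ M) ∧
      ∀ n, f (Λ.pt n ω) = w n

end RandomPolydiscSeq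


section SzegoAux

set_option maxHeartbeats 1000000

lemma normSq_aux (ρ u : ℝ) :
    ‖1 - (ρ:ℂ) * Complex.exp (Complex.I * (u:ℂ))‖ ^ 2
      = 1 - 2*ρ*Real.cos u + ρ^2 := by
  have h : Complex.I * (u:ℂ) = (u:ℂ) * Complex.I := mul_comm _ _
  rw [h, Complex.sq_norm, Complex.exp_mul_I, Complex.normSq_apply]
  simp [Complex.cos_ofReal_re, Complex.sin_ofReal_re]
  nlinarith [Real.sin_sq_add_cos_sq u]

lemma denom_pos {ρ : ℝ} (h0 : 0 ≤ ρ) (h1 : ρ < 1) (u : ℝ) :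
    0 < 1 - 2*ρ*Real.cos u + ρ^2 := by
  nlinarith [Real.cos_le_one u, Real.neg_one_le_cos u]

lemma integral_inv_sq_add_mul_sq {a b : ℝ} (ha : 0 < a) (hb : 0 < b) :
    ∫ t : ℝ, (a^2 + b^2 * t^2)⁻¹ = Real.pi / (a*b) := by
  have h1 : ∀ t : ℝ, (a^2 + b^2 * t^2)⁻¹ = (a^2)⁻¹ * (1 + ((b/a) * t)^2)⁻¹ := by
    intro t
    rw [← mul_inv]
    congr 1
    field_simp
  simp_rw [h1]
  rw [MeasureTheory.integral_const_mul]
  have h2 : (∫ t : ℝ, (1 + ((b/a) * t)^2)⁻¹) = |(b/a)⁻¹| • ∫ y : ℝ, (1 + y^2)⁻¹ :=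
    MeasureTheory.Measure.integral_comp_mul_left (fun y => (1 + y^2)⁻¹) (b/a)
  rw [h2, integral_univ_inv_one_add_sq, abs_of_pos (by positivity), smul_eq_mul]
  field_simp

lemma poisson {ρ : ℝ} (h0 : 0 ≤ ρ) (h1 : ρ < 1) :
    ∫ u in (0:ℝ)..(2*Real.pi), (1 - 2*ρ*Real.cos u + ρ^2)⁻¹ = 2*Real.pi/(1-ρ^2) := by
  have hper : Function.Periodic (fun u : ℝ => (1 - 2*ρ*Real.cos u + ρ^2)⁻¹) (2*Real.pi) := by
    intro x; simp [Real.cos_add_two_pi]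
  have h2 : (∫ u in (0:ℝ)..(2*Real.pi), (1 - 2*ρ*Real.cos u + ρ^2)⁻¹)
      = ∫ u in (-Real.pi:ℝ)..Real.pi, (1 - 2*ρ*Real.cos u + ρ^2)⁻¹ := by
    have h := hper.intervalIntegral_add_eq (0:ℝ) (-Real.pi)
    rw [zero_add] at h
    rw [h]
    congr 1
    ring
  rw [h2]
  have hle : (-Real.pi:ℝ) ≤ Real.pi := by linarith [Real.pi_pos]
  rw [intervalIntegral.integral_of_le hle, MeasureTheory.integral_Ioc_eq_integral_Ioo]
  have himg : (fun t : ℝ => 2 * Real.arctan t) '' univ = Ioo (-Real.pi) Real.pi := by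
    rw [Set.image_univ]
    have h3 : (fun t : ℝ => 2 * Real.arctan t) = (fun y : ℝ => 2 * y) ∘ Real.arctan := rfl
    rw [h3, Set.range_comp, Real.range_arctan, Set.image_mul_left_Ioo (by norm_num : (0:ℝ) < 2)]
    ring_nf
  have hderiv : ∀ t ∈ (univ : Set ℝ), HasDerivWithinAt (fun t : ℝ => 2 * Real.arctan t)
      (2 * (1 + t^2)⁻¹) univ t := by
    intro t _
    exact ((Real.hasDerivAt_arctan t).const_mul 2).hasDerivWithinAt.congr_deriv (by
      rw [one_div])
  have hinj : Set.InjOn (fun t : ℝ => 2 * Real.arctan t) univ := by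
    intro x _ y _ h
    dsimp at h
    exact Real.arctan_injective (by linarith)
  have h4 := MeasureTheory.integral_image_eq_integral_abs_deriv_smul (MeasurableSet.univ)
    hderiv hinj (fun u => (1 - 2*ρ*Real.cos u + ρ^2)⁻¹)
  rw [himg] at h4
  rw [h4, MeasureTheory.setIntegral_univ]
  have hpt : ∀ t : ℝ, |2 * (1 + t^2)⁻¹| • (1 - 2*ρ*Real.cos (2 * Real.arctan t) + ρ^2)⁻¹
      = 2 * ((1-ρ)^2 + (1+ρ)^2 * t^2)⁻¹ := by
    intro t
    have ht : (0:ℝ) < 1 + t^2 := by positivity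
    have hcos : Real.cos (2 * Real.arctan t) = 2 * (1 + t^2)⁻¹ - 1 := by
      rw [Real.cos_two_mul, Real.cos_arctan]
      rw [div_pow, one_pow, Real.sq_sqrt (by positivity)]
      ring
    have hd : (0:ℝ) < 1 - 2*ρ*(2*(1+t^2)⁻¹ - 1) + ρ^2 := by
      have h5 := denom_pos h0 h1 (2 * Real.arctan t)
      rwa [hcos] at h5
    have hd2 : (0:ℝ) < (1-ρ)^2 + (1+ρ)^2 * t^2 := by nlinarith
    have hD : 1 - 2*ρ*(2*(1+t^2)⁻¹ - 1) + ρ^2 = ((1-ρ)^2 + (1+ρ)^2*t^2) / (1+t^2) := by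
      field_simp
      ring
    rw [hcos, abs_of_pos (by positivity), smul_eq_mul, hD, inv_div]
    field_simp
  simp_rw [hpt]
  rw [MeasureTheory.integral_const_mul, integral_inv_sq_add_mul_sq (by linarith) (by linarith)]
  rw [show (1:ℝ)-ρ^2 = (1-ρ)*(1+ρ) from by ring, mul_div_assoc]

/-- The uniform probability measure on `[0, 2π)`. -/
def unifM : Measure ℝ :=
  (ENNReal.ofReal (2 * Real.pi))⁻¹ • volume.restrict (Set.Ico (0 : ℝ) (2 * Real.pi))

instance : IsProbabilityMeasure unifM := by
  constructor
  rw [unifM, Measure.smul_apply, Measure.restrict_apply MeasurableSet.univ, Set.univ_inter,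
    Real.volume_Ico, smul_eq_mul]
  rw [sub_zero, ENNReal.inv_mul_cancel (ENNReal.ofReal_pos.2 (by positivity)).ne'
    ENNReal.ofReal_ne_top]

lemma circle_avg {f : ℝ → ℝ} (hper : Function.Periodic f (2*Real.pi))
    (hcont : Continuous f) (y : ℝ) :
    ∫ x, f (x - y) ∂unifM = (2*Real.pi)⁻¹ * ∫ u in (0:ℝ)..(2*Real.pi), f u := by
  rw [unifM, integral_smul_measure, ENNReal.toReal_inv, ENNReal.toReal_ofReal (by positivity),
    smul_eq_mul]
  congr 1
  have h1 : ∫ x in Ico (0:ℝ) (2*Real.pi), f (x - y)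
      = ∫ x in (0:ℝ)..(2*Real.pi), f (x - y) := by
    rw [integral_Ico_eq_integral_Ioo, ← MeasureTheory.integral_Ioc_eq_integral_Ioo,
      intervalIntegral.integral_of_le (by positivity)]
  rw [h1, intervalIntegral.integral_comp_sub_right _ y]
  have h2 := hper.intervalIntegral_add_eq (0 - y) 0
  rw [zero_add] at h2
  rw [show (2:ℝ)*Real.pi - y = 0 - y + 2*Real.pi from by ring, h2]

lemma pair_integral {Ω : Type*} [MeasurableSpace Ω] {P : Measure Ω} [IsProbabilityMeasure P]
    {θ φ : Ω → ℝ} (hθ : Measurable θ) (hφ : Measurable φ)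
    (hmθ : Measure.map θ P = unifM) (hmφ : Measure.map φ P = unifM)
    (hind : IndepFun θ φ P) {ρ : ℝ} (h0 : 0 ≤ ρ) (h1 : ρ < 1) :
    ∫ ω, (1 - 2*ρ*Real.cos (θ ω - φ ω) + ρ^2)⁻¹ ∂P = (1 - ρ^2)⁻¹ := by
  have hcont : Continuous fun u : ℝ => (1 - 2*ρ*Real.cos u + ρ^2)⁻¹ := by
    apply Continuous.inv₀ (by continuity)
    exact fun u => (denom_pos h0 h1 u).ne'
  have hg : Continuous fun p : ℝ × ℝ => (1 - 2*ρ*Real.cos (p.1 - p.2) + ρ^2)⁻¹ :=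
    hcont.comp (continuous_fst.sub continuous_snd)
  have hmap : Measure.map (fun ω => (θ ω, φ ω)) P = unifM.prod unifM := by
    rw [(ProbabilityTheory.indepFun_iff_map_prod_eq_prod_map_map hθ.aemeasurable
      hφ.aemeasurable).1 hind, hmθ, hmφ]
  have step1 : ∫ ω, (1 - 2*ρ*Real.cos (θ ω - φ ω) + ρ^2)⁻¹ ∂P
      = ∫ p : ℝ × ℝ, (1 - 2*ρ*Real.cos (p.1 - p.2) + ρ^2)⁻¹ ∂(unifM.prod unifM) := by
    rw [← hmap, integral_map (hθ.prodMk hφ).aemeasurable hg.aestronglyMeasurable]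
  rw [step1]
  have hintg : Integrable (fun p : ℝ × ℝ => (1 - 2*ρ*Real.cos (p.1 - p.2) + ρ^2)⁻¹)
      (unifM.prod unifM) := by
    refine Integrable.mono' (integrable_const (((1-ρ)^2)⁻¹)) hg.aestronglyMeasurable
      (ae_of_all _ fun p => ?_)
    rw [Real.norm_eq_abs, abs_of_pos (inv_pos.2 (denom_pos h0 h1 _))]
    apply inv_anti₀ (by nlinarith)
    nlinarith [Real.cos_le_one (p.1 - p.2)]
  rw [MeasureTheory.integral_prod _ hintg]
  have hper : Function.Periodic (fun u : ℝ => (1 - 2*ρ*Real.cos u + ρ^2)⁻¹) (2*Real.pi) := by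
    intro x; simp [Real.cos_add_two_pi]
  have inner : ∀ x : ℝ, ∫ y, (1 - 2*ρ*Real.cos (x - y) + ρ^2)⁻¹ ∂unifM = (1 - ρ^2)⁻¹ := by
    intro x
    have hx : ∀ y : ℝ, (1 - 2*ρ*Real.cos (x - y) + ρ^2)⁻¹
        = (fun u => (1 - 2*ρ*Real.cos u + ρ^2)⁻¹) (y - x) := by
      intro y
      simp only
      rw [show x - y = -(y - x) from by ring, Real.cos_neg]
    simp_rw [hx]
    rw [circle_avg hper hcont x, poisson h0 h1]
    have hpi : (Real.pi:ℝ) ≠ 0 := Real.pi_ne_zero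
    field_simp
  simp_rw [inner]
  simp

lemma indep_prod_integral {d : ℕ} {Ω : Type*} [MeasurableSpace Ω] {P : Measure Ω}
    [IsProbabilityMeasure P]
    (θ : ℕ → Fin d → Ω → ℝ) (hmeas : ∀ p : ℕ × Fin d, Measurable (θ p.1 p.2))
    (hind : iIndepFun (fun (p : ℕ × Fin d) ω => θ p.1 p.2 ω) P)
    (n j : ℕ) (G : Fin d → ℝ → ℝ → ℝ)
    (hG : ∀ i, Measurable (fun q : ℝ × ℝ => G i q.1 q.2))
    (C : Fin d → ℝ) (hGbd : ∀ i x y, |G i x y| ≤ C i)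
    (s : Finset (Fin d)) :
    ∫ ω, ∏ i ∈ s, G i (θ n i ω) (θ j i ω) ∂P
      = ∏ i ∈ s, ∫ ω, G i (θ n i ω) (θ j i ω) ∂P := by
  classical
  have hFmeas : ∀ i, Measurable fun ω => G i (θ n i ω) (θ j i ω) := fun i =>
    (hG i).comp ((hmeas (n, i)).prodMk (hmeas (j, i)))
  have hC0 : ∀ i, 0 ≤ C i := fun i => (abs_nonneg _).trans (hGbd i 0 0)
  have hFint : ∀ i, Integrable (fun ω => G i (θ n i ω) (θ j i ω)) P := fun i =>
    Integrable.mono' (integrable_const (C i)) (hFmeas i).aestronglyMeasurable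
      (ae_of_all _ fun ω => hGbd i _ _)
  induction s using Finset.induction_on with
  | empty => simp
  | insert _ _ ha ih =>
    rename_i a s'
    simp_rw [Finset.prod_insert ha]
    rw [← ih]
    set S : Finset (ℕ × Fin d) := {(n, a), (j, a)} with hS
    set T : Finset (ℕ × Fin d) :=
      s'.image (fun i => (n, i)) ∪ s'.image (fun i => (j, i)) with hT
    have hdisj : Disjoint S T := by
      rw [Finset.disjoint_left]
      intro p hp hpT
      have hp2 : p.2 = a := by
        rw [hS] at hp
        rcases Finset.mem_insert.1 hp with h | h
        · rw [h]
        · rw [Finset.mem_singleton.1 h]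
      have hp2' : p.2 ∈ s' := by
        rw [hT] at hpT
        rcases Finset.mem_union.1 hpT with h | h <;>
        · obtain ⟨i, hi, hip⟩ := Finset.mem_image.1 h
          rw [← hip]
          exact hi
      rw [hp2] at hp2'
      exact ha hp2'
    have h1 := hind.indepFun_finset S T hdisj hmeas
    have hnaS : ((n, a) : ℕ × Fin d) ∈ S := by simp [hS]
    have hjaS : ((j, a) : ℕ × Fin d) ∈ S := by simp [hS]
    set φ : (S → ℝ) → ℝ := fun x => G a (x ⟨(n, a), hnaS⟩) (x ⟨(j, a), hjaS⟩) with hφ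
    set ψ : (T → ℝ) → ℝ := fun x =>
      ∏ i ∈ s'.attach, G i.1 (x ⟨(n, i.1), by
          exact Finset.mem_union_left _ (Finset.mem_image_of_mem _ i.2)⟩)
        (x ⟨(j, i.1), by
          exact Finset.mem_union_right _ (Finset.mem_image_of_mem _ i.2)⟩) with hψ
    have hφm : Measurable φ := by
      have hm : Measurable fun x : S → ℝ => ((x ⟨(n,a),hnaS⟩, x ⟨(j,a),hjaS⟩) : ℝ × ℝ) :=
        (measurable_pi_apply _).prodMk (measurable_pi_apply _)
      exact (hG a).comp hm
    have hψm : Measurable ψ := by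
      apply Finset.measurable_prod
      intro i _
      have hm : Measurable fun x : T → ℝ => ((x ⟨(n, i.1), Finset.mem_union_left _
          (Finset.mem_image_of_mem _ i.2)⟩, x ⟨(j, i.1), Finset.mem_union_right _
          (Finset.mem_image_of_mem _ i.2)⟩) : ℝ × ℝ) :=
        (measurable_pi_apply _).prodMk (measurable_pi_apply _)
      exact (hG i.1).comp hm
    have h2 : IndepFun (fun ω => G a (θ n a ω) (θ j a ω))
        (fun ω => ∏ i ∈ s', G i (θ n i ω) (θ j i ω)) P := by
      have h3 := h1.comp hφm hψm
      have e1 : (φ ∘ fun ω (p : S) => θ p.1.1 p.1.2 ω)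
          = fun ω => G a (θ n a ω) (θ j a ω) := rfl
      have e2 : (ψ ∘ fun ω (p : T) => θ p.1.1 p.1.2 ω)
          = fun ω => ∏ i ∈ s', G i (θ n i ω) (θ j i ω) := by
        funext ω
        simp only [Function.comp_apply, hψ]
        rw [← Finset.prod_attach s' (fun i => G i (θ n i ω) (θ j i ω))]
      rw [e1, e2] at h3
      exact h3
    have hprodint : Integrable (fun ω => ∏ i ∈ s', G i (θ n i ω) (θ j i ω)) P := by
      refine Integrable.mono' (integrable_const (∏ i ∈ s', C i))
        ((Finset.measurable_prod _ fun i _ => hFmeas i).aestronglyMeasurable)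
        (ae_of_all _ fun ω => ?_)
      rw [Real.norm_eq_abs, Finset.abs_prod]
      exact Finset.prod_le_prod (fun i _ => abs_nonneg _) (fun i _ => hGbd i _ _)
    exact h2.integral_mul_eq_mul_integral (hFint a).aestronglyMeasurable hprodint.aestronglyMeasurable

lemma factor_sq {r s : ℝ} (x y : ℝ) (hr0 : 0 ≤ r) (hr1 : r < 1) (hs0 : 0 ≤ s) (hs1 : s < 1) :
    ‖(((Real.sqrt ((1 - ‖(r:ℂ)*Complex.exp (Complex.I*(x:ℂ))‖ ^ 2)
        * (1 - ‖(s:ℂ)*Complex.exp (Complex.I*(y:ℂ))‖ ^ 2)) : ℝ) : ℂ)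
      / (1 - ((r:ℂ)*Complex.exp (Complex.I*(x:ℂ)))
          * (starRingEnd ℂ) ((s:ℂ)*Complex.exp (Complex.I*(y:ℂ)))))‖ ^ 2
    = (1-r^2)*(1-s^2) * (1 - 2*(r*s)*Real.cos (x-y) + (r*s)^2)⁻¹ := by
  have habsr : ‖(r:ℂ)*Complex.exp (Complex.I*(x:ℂ))‖ = r := by
    rw [norm_mul, Complex.norm_real, Real.norm_eq_abs, Complex.norm_exp, _root_.abs_of_nonneg hr0]
    simp [Complex.mul_re]
  have habss : ‖(s:ℂ)*Complex.exp (Complex.I*(y:ℂ))‖ = s := by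
    rw [norm_mul, Complex.norm_real, Real.norm_eq_abs, Complex.norm_exp, _root_.abs_of_nonneg hs0]
    simp [Complex.mul_re]
  have hconj : (starRingEnd ℂ) ((s:ℂ)*Complex.exp (Complex.I*(y:ℂ)))
      = (s:ℂ) * Complex.exp (-(Complex.I*(y:ℂ))) := by
    rw [map_mul, Complex.conj_ofReal, ← Complex.exp_conj]
    congr 2
    simp [Complex.conj_I, Complex.conj_ofReal]
  have hprod : ((r:ℂ)*Complex.exp (Complex.I*(x:ℂ))) * ((s:ℂ)*Complex.exp (-(Complex.I*(y:ℂ))))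
      = (((r*s : ℝ)):ℂ) * Complex.exp (Complex.I * ((x - y : ℝ):ℂ)) := by
    rw [show ((r:ℂ)*Complex.exp (Complex.I*(x:ℂ))) * ((s:ℂ)*Complex.exp (-(Complex.I*(y:ℂ))))
        = ((r:ℂ)*(s:ℂ)) * (Complex.exp (Complex.I*(x:ℂ)) * Complex.exp (-(Complex.I*(y:ℂ))))
        from by ring, ← Complex.exp_add]
    push_cast
    ring_nf
  rw [habsr, habss, hconj, hprod, norm_div, div_pow, Complex.norm_real, Real.norm_eq_abs,
    _root_.abs_of_nonneg (Real.sqrt_nonneg _),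
    Real.sq_sqrt (mul_nonneg (by nlinarith) (by nlinarith) : (0:ℝ) ≤ (1 - r^2) * (1 - s^2)),
    normSq_aux (r*s) (x-y), div_eq_mul_inv]

lemma coord_bound_core {r s A B : ℝ} (hA1 : (1:ℝ) ≤ A) (hB1 : (1:ℝ) ≤ B)
    (hr1 : 1 - A⁻¹ ≤ r) (hr2 : r < 1 - (2*A)⁻¹)
    (hs1 : 1 - B⁻¹ ≤ s) (hs2 : s < 1 - (2*B)⁻¹) :
    (1/4) * (A + B)⁻¹ ≤ (1-r^2)*(1-s^2) * (1-(r*s)^2)⁻¹ ∧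
    (1-r^2)*(1-s^2) * (1-(r*s)^2)⁻¹ ≤ 8 * (A + B)⁻¹ := by
  have hApos : (0:ℝ) < A := by linarith
  have hBpos : (0:ℝ) < B := by linarith
  have hiA : A⁻¹ ≤ 1 := inv_le_one_of_one_le₀ hA1
  have hiB : B⁻¹ ≤ 1 := inv_le_one_of_one_le₀ hB1
  have hiA2 : (0:ℝ) < (2*A)⁻¹ := by positivity
  have hiB2 : (0:ℝ) < (2*B)⁻¹ := by positivity
  have haA : (1-r) * A ≤ 1 := by
    have h : 1-r ≤ A⁻¹ := by linarith
    calc (1-r) * A ≤ A⁻¹ * A := mul_le_mul_of_nonneg_right h hApos.le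
    _ = 1 := inv_mul_cancel₀ hApos.ne'
  have haA2 : 1 < 2 * ((1-r) * A) := by
    have h2A : (0:ℝ) < 2*A := by linarith
    have h : (2*A)⁻¹ < 1-r := by linarith
    calc (1:ℝ) = (2*A)⁻¹ * (2*A) := (inv_mul_cancel₀ h2A.ne').symm
    _ < (1-r) * (2*A) := mul_lt_mul_of_pos_right h h2A
    _ = 2 * ((1-r) * A) := by ring
  have hbB : (1-s) * B ≤ 1 := by
    have h : 1-s ≤ B⁻¹ := by linarith
    calc (1-s) * B ≤ B⁻¹ * B := mul_le_mul_of_nonneg_right h hBpos.le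
    _ = 1 := inv_mul_cancel₀ hBpos.ne'
  have hbB2 : 1 < 2 * ((1-s) * B) := by
    have h2B : (0:ℝ) < 2*B := by linarith
    have h : (2*B)⁻¹ < 1-s := by linarith
    calc (1:ℝ) = (2*B)⁻¹ * (2*B) := (inv_mul_cancel₀ h2B.ne').symm
    _ < (1-s) * (2*B) := mul_lt_mul_of_pos_right h h2B
    _ = 2 * ((1-s) * B) := by ring
  have hr0 : 0 ≤ r := by linarith
  have hs0 : 0 ≤ s := by linarith
  have hrlt : r < 1 := by linarith
  have hslt : s < 1 := by linarith
  have hra : (0:ℝ) ≤ 1 - r := by linarith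
  have hsa : (0:ℝ) ≤ 1 - s := by linarith
  clear hr1 hr2 hs1 hs2 hiA hiB hiA2 hiB2
  have hrs1 : r * s < 1 := by nlinarith
  have hrs0 : 0 ≤ r * s := mul_nonneg hr0 hs0
  have hden : (0:ℝ) < 1 - (r*s)^2 := by nlinarith
  have hABpos : (0:ℝ) < A + B := by linarith
  have e1 : (1-r^2) ≤ 2*(1-r) := by nlinarith
  have e1' : (0:ℝ) ≤ 1-r^2 := by nlinarith
  have e2 : (1-s^2) ≤ 2*(1-s) := by nlinarith
  have e2' : (0:ℝ) ≤ 1-s^2 := by nlinarith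
  have key1 : (1-r^2)*(1-s^2) ≤ 4*((1-r)*(1-s)) := by
    nlinarith [mul_le_mul e1 e2 e2' (by linarith : (0:ℝ) ≤ 2*(1-r))]
  have key2 : (1-r)*(1-s) ≤ (1-r^2)*(1-s^2) := by
    have f1 : 1-r ≤ 1-r^2 := by nlinarith
    have f2 : 1-s ≤ 1-s^2 := by nlinarith
    nlinarith [mul_le_mul f1 f2 hsa e1']
  have key3 : ((1-r)+(1-s))/2 ≤ 1-(r*s)^2 := by
    have h3a : 1 - r*s ≤ 1-(r*s)^2 := by nlinarith
    have h3b : ((1-r)+(1-s))/2 ≤ 1 - r*s := by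
      nlinarith [mul_nonneg hr0 hsa, mul_nonneg hs0 hra]
    linarith
  have key4 : 1-(r*s)^2 ≤ 2*((1-r)+(1-s)) := by
    nlinarith [mul_nonneg hra hsa]
  have key5 : ((1-r)*(1-s))*(A+B) ≤ (1-r)+(1-s) := by
    nlinarith [mul_le_mul_of_nonneg_left haA hsa, mul_le_mul_of_nonneg_left hbB hra]
  have key6 : (1-r)+(1-s) ≤ 2*(((1-r)*(1-s))*(A+B)) := by
    nlinarith [mul_le_mul_of_nonneg_left haA2.le hsa, mul_le_mul_of_nonneg_left hbB2.le hra]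
  rw [← div_eq_mul_inv ((1-r^2)*(1-s^2))]
  constructor
  · have eq1 : (1/4:ℝ) * (A+B)⁻¹ = 1/(4*(A+B)) := by
      rw [eq_comm, one_div, mul_inv]
      norm_num
    rw [eq1, div_le_div_iff₀ (by linarith) hden]
    nlinarith [mul_le_mul_of_nonneg_right key2 (by linarith : (0:ℝ) ≤ 4*(A+B)), key4, key6]
  · have eq2 : (8:ℝ) * (A+B)⁻¹ = 8/(A+B) := (div_eq_mul_inv 8 _).symm
    rw [eq2, div_le_div_iff₀ hden hABpos]
    nlinarith [mul_le_mul_of_nonneg_right key1 hABpos.le, key5, key3]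

lemma coord_bound {r s : ℝ} {m k : ℕ}
    (hr1 : 1 - (2:ℝ)^(-(m:ℤ)) ≤ r) (hr2 : r < 1 - (2:ℝ)^(-((m:ℤ)+1)))
    (hs1 : 1 - (2:ℝ)^(-(k:ℤ)) ≤ s) (hs2 : s < 1 - (2:ℝ)^(-((k:ℤ)+1))) :
    (1/4) * ((2:ℝ)^m + (2:ℝ)^k)⁻¹ ≤ (1-r^2)*(1-s^2) * (1-(r*s)^2)⁻¹ ∧
    (1-r^2)*(1-s^2) * (1-(r*s)^2)⁻¹ ≤ 8 * ((2:ℝ)^m + (2:ℝ)^k)⁻¹ := by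
  have hzm : (2:ℝ)^(-(m:ℤ)) = ((2:ℝ)^m)⁻¹ := by rw [zpow_neg, zpow_natCast]
  have hzm2 : (2:ℝ)^(-((m:ℤ)+1)) = (2*(2:ℝ)^m)⁻¹ := by
    rw [zpow_neg, zpow_add₀ (by norm_num : (2:ℝ) ≠ 0), zpow_natCast, zpow_one, mul_comm]
  have hzk : (2:ℝ)^(-(k:ℤ)) = ((2:ℝ)^k)⁻¹ := by rw [zpow_neg, zpow_natCast]
  have hzk2 : (2:ℝ)^(-((k:ℤ)+1)) = (2*(2:ℝ)^k)⁻¹ := by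
    rw [zpow_neg, zpow_add₀ (by norm_num : (2:ℝ) ≠ 0), zpow_natCast, zpow_one, mul_comm]
  rw [hzm] at hr1; rw [hzm2] at hr2; rw [hzk] at hs1; rw [hzk2] at hs2
  exact coord_bound_core (one_le_pow₀ (by norm_num)) (one_le_pow₀ (by norm_num)) hr1 hr2 hs1 hs2

lemma aux_sq_pos {p : ℝ} (h0 : 0 ≤ p) (h1 : p < 1) : (0:ℝ) < 1 - p^2 := by nlinarith

lemma aux_sq_nonneg {p : ℝ} (h0 : 0 ≤ p) (h1 : p < 1) : (0:ℝ) ≤ 1 - p^2 := by nlinarith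

lemma aux_mul_lt_one {r s : ℝ} (h0 : 0 ≤ r) (h1 : r < 1) (h0' : 0 ≤ s) (h1' : s < 1) :
    r * s < 1 := by nlinarith

lemma aux_one_sub_sq_pos {p : ℝ} (h1 : p < 1) : (0:ℝ) < (1 - p)^2 := by nlinarith

lemma aux_denom_ge {p : ℝ} (h0 : 0 ≤ p) (u : ℝ) :
    (1 - p)^2 ≤ 1 - 2*p*Real.cos u + p^2 := by nlinarith [Real.cos_le_one u]

end SzegoAux

set_option maxHeartbeats 1000000 in
/-- There are constants `c_d, C_d > 0` depending only on `d` such that, for any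
random sequence `Λ` in `𝔻^d`, all `n ≠ j` and multi-indices `m, k` with `λ_n ∈ I_m`, `λ_j ∈ I_k`,
`c_d ∏_i (2^{m_i}+2^{k_i})⁻¹ ≤ 𝔼(|S_d(λ_n,λ_j)|²) ≤ C_d ∏_i (2^{m_i}+2^{k_i})⁻¹`. -/
theorem expected_szego_two_sided_bound (d : ℕ) (hd : 1 ≤ d)
    (Ω : Type*) [MeasurableSpace Ω] (P : MeasureTheory.Measure Ω) [IsProbabilityMeasure P] :
    ∃ c C : ℝ, 0 < c ∧ 0 < C ∧
      ∀ (Λ : RandomPolydiscSeq d ℕ Ω P) (n j : ℕ), n ≠ j →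
        ∀ m k : Fin d → ℕ, Λ.inShell n m → Λ.inShell j k →
          c * ∏ i, ((2 : ℝ) ^ (m i) + (2 : ℝ) ^ (k i))⁻¹
              ≤ ∫ ω, ‖szego (Λ.pt n ω) (Λ.pt j ω)‖ ^ 2 ∂P ∧
          ∫ ω, ‖szego (Λ.pt n ω) (Λ.pt j ω)‖ ^ 2 ∂P
              ≤ C * ∏ i, ((2 : ℝ) ^ (m i) + (2 : ℝ) ^ (k i))⁻¹ := by
  classical
  refine ⟨(1/4 : ℝ)^d, (8 : ℝ)^d, by positivity, by positivity, ?_⟩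
  intro Λ n j hnj m k hm hk
  have hr0 : ∀ i, 0 ≤ Λ.r n i := fun i => (Λ.r_mem n i).1
  have hr1 : ∀ i, Λ.r n i < 1 := fun i => (Λ.r_mem n i).2
  have hs0 : ∀ i, 0 ≤ Λ.r j i := fun i => (Λ.r_mem j i).1
  have hs1 : ∀ i, Λ.r j i < 1 := fun i => (Λ.r_mem j i).2
  have hp0 : ∀ i, 0 ≤ Λ.r n i * Λ.r j i := fun i => mul_nonneg (hr0 i) (hs0 i)
  have hp1 : ∀ i, Λ.r n i * Λ.r j i < 1 := fun i =>
    aux_mul_lt_one (hr0 i) (hr1 i) (hs0 i) (hs1 i)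
  set G : Fin d → ℝ → ℝ → ℝ := fun i x y =>
    (1 - (Λ.r n i)^2) * (1 - (Λ.r j i)^2)
      * (1 - 2*(Λ.r n i * Λ.r j i)*Real.cos (x - y) + (Λ.r n i * Λ.r j i)^2)⁻¹ with hGdef
  have step0 : ∀ ω, ‖szego (Λ.pt n ω) (Λ.pt j ω)‖ ^ 2
      = ∏ i, G i (Λ.θ n i ω) (Λ.θ j i ω) := by
    intro ω
    simp only [szego, RandomPolydiscSeq.pt, hGdef]
    rw [norm_prod, ← Finset.prod_pow]
    exact Finset.prod_congr rfl fun i _ =>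
      factor_sq (Λ.θ n i ω) (Λ.θ j i ω) (hr0 i) (hr1 i) (hs0 i) (hs1 i)
  have hGmeas : ∀ i, Measurable (fun q : ℝ × ℝ => G i q.1 q.2) := by
    intro i
    apply Continuous.measurable
    simp only [hGdef]
    apply Continuous.mul continuous_const
    apply Continuous.inv₀
    · continuity
    · exact fun q => (denom_pos (hp0 i) (hp1 i) (q.1 - q.2)).ne'
  have hGbd : ∀ i x y, |G i x y|
      ≤ (1 - (Λ.r n i)^2) * (1 - (Λ.r j i)^2) * ((1 - Λ.r n i * Λ.r j i)^2)⁻¹ := by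
    intro i x y
    have hd1 := denom_pos (hp0 i) (hp1 i) (x - y)
    have hc : 0 ≤ (1 - (Λ.r n i)^2) * (1 - (Λ.r j i)^2) :=
      mul_nonneg (aux_sq_nonneg (hr0 i) (hr1 i)) (aux_sq_nonneg (hs0 i) (hs1 i))
    have hq : (0:ℝ) < (1 - Λ.r n i * Λ.r j i)^2 := aux_one_sub_sq_pos (hp1 i)
    simp only [hGdef]
    rw [_root_.abs_of_nonneg (mul_nonneg hc (inv_nonneg.2 hd1.le))]
    apply mul_le_mul_of_nonneg_left _ hc
    exact inv_anti₀ hq (aux_denom_ge (hp0 i) (x - y))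
  have step1 := indep_prod_integral Λ.θ (fun p => Λ.θ_meas p.1 p.2) Λ.θ_indep n j G hGmeas
    _ hGbd Finset.univ
  have step2 : ∀ i, ∫ ω, G i (Λ.θ n i ω) (Λ.θ j i ω) ∂P
      = (1 - (Λ.r n i)^2) * (1 - (Λ.r j i)^2) * (1 - (Λ.r n i * Λ.r j i)^2)⁻¹ := by
    intro i
    simp only [hGdef]
    rw [MeasureTheory.integral_const_mul]
    congr 1
    exact pair_integral (Λ.θ_meas n i) (Λ.θ_meas j i) (Λ.θ_unif n i) (Λ.θ_unif j i)
      (Λ.θ_indep.indepFun (show ((n,i) : ℕ × Fin d) ≠ (j,i) by simp [Prod.ext_iff, hnj]))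
      (hp0 i) (hp1 i)
  have hE : (∫ ω, ‖szego (Λ.pt n ω) (Λ.pt j ω)‖ ^ 2 ∂P)
      = ∏ i, ((1 - (Λ.r n i)^2) * (1 - (Λ.r j i)^2) * (1 - (Λ.r n i * Λ.r j i)^2)⁻¹) := by
    simp_rw [step0]
    rw [step1]
    exact Finset.prod_congr rfl fun i _ => step2 i
  rw [hE]
  have hcb := fun i => coord_bound (hm i).1 (hm i).2 (hk i).1 (hk i).2
  constructor
  · have e : (1/4:ℝ)^d * ∏ i, ((2:ℝ)^(m i) + (2:ℝ)^(k i))⁻¹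
        = ∏ i : Fin d, ((1/4:ℝ) * ((2:ℝ)^(m i) + (2:ℝ)^(k i))⁻¹) := by
      rw [Finset.prod_mul_distrib, Finset.prod_const, Finset.card_univ, Fintype.card_fin]
    rw [e]
    exact Finset.prod_le_prod (fun i _ => by positivity) (fun i _ => (hcb i).1)
  · have e : (8:ℝ)^d * ∏ i, ((2:ℝ)^(m i) + (2:ℝ)^(k i))⁻¹
        = ∏ i : Fin d, ((8:ℝ) * ((2:ℝ)^(m i) + (2:ℝ)^(k i))⁻¹) := by
      rw [Finset.prod_mul_distrib, Finset.prod_const, Finset.card_univ, Fintype.card_fin]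
    rw [e]
    refine Finset.prod_le_prod (fun i _ => ?_) (fun i _ => (hcb i).2)
    have hden : (0:ℝ) < 1 - (Λ.r n i * Λ.r j i)^2 := aux_sq_pos (hp0 i) (hp1 i)
    have hc : 0 ≤ (1 - (Λ.r n i)^2) * (1 - (Λ.r j i)^2) :=
      mul_nonneg (aux_sq_nonneg (hr0 i) (hr1 i)) (aux_sq_nonneg (hs0 i) (hs1 i))
    exact mul_nonneg hc (inv_nonneg.2 hden.le)
end
end
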